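/- For every function f : ℕ → ℕ tending to infinity, there exists a recurrent right-infinite binary word w such that p_w(n) ≤ n·f(n) for all sufficiently large n, yet w has infinitely many distinct primitive factors y with the property that y^n is a factor of w for every n ≥ 1. -/

import Mathlib

variable {α : Type*}

/-- `u` occurs in the infinite word `w` at position `i`. -/
def FactorAt (w : ℕ → α) (i : ℕ) (u : List α) : Prop :=
  u = (List.range u.length).map fun k => w (i + k)

/-- The set of (finite) factors of the right-infinite word `w`. -/
def Fac (w : ℕ → α) : Set (List α) := {u | ∃ i, FactorAt w i u}

/-- The factor complexity: the number of distinct length-`n` factors of `w`. -/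
noncomputable def FacComplexity (w : ℕ → α) (n : ℕ) : ℕ :=
  Set.ncard {u : List α | u.length = n ∧ u ∈ Fac w}

/-- `listPow y k` is the `k`-fold concatenation `y^k`. -/
def listPow (y : List α) : ℕ → List α
  | 0 => []
  | n + 1 => y ++ listPow y n

/-- A nonempty word is primitive if it is not a proper power. -/
def Primitive (y : List α) : Prop :=
  y ≠ [] ∧ ∀ (z : List α) (k : ℕ), y = listPow z k → k = 1

open List

/-! ### listPow basics -/

theorem listPow_length (y : List α) : ∀ b, (listPow y b).length = b * y.length
  | 0 => by simp [listPow]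
  | b+1 => by simp only [listPow, length_append, listPow_length y b]; ring

theorem listPow_add (y : List α) (b c : ℕ) :
    listPow y (b + c) = listPow y b ++ listPow y c := by
  induction b with
  | zero => simp [listPow]
  | succ b ih => rw [Nat.succ_add]; simp [listPow, ih]

theorem listPow_one (y : List α) : listPow y 1 = y := by simp [listPow]

theorem listPow_prefix (y : List α) {b c : ℕ} (h : b ≤ c) :
    listPow y b <+: listPow y c :=
  ⟨listPow y (c - b), by rw [← listPow_add, Nat.add_sub_cancel' h]⟩

theorem listPow_suffix (y : List α) {b c : ℕ} (h : b ≤ c) :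
    listPow y b <:+ listPow y c :=
  ⟨listPow y (c - b), by rw [← listPow_add, Nat.sub_add_cancel h]⟩

theorem listPow_count (y : List Bool) (x : Bool) : ∀ b, (listPow y b).count x = b * y.count x
  | 0 => by simp [listPow]
  | b+1 => by simp only [listPow, count_append, listPow_count y x b]; ring

/-! ### the building blocks -/

def yw (a : ℕ) : List Bool := List.replicate a false ++ [true]

theorem yw_length (a : ℕ) : (yw a).length = a + 1 := by simp [yw]

theorem yw_count (a : ℕ) : (yw a).count true = 1 := by
  simp [yw, count_replicate]

theorem yw_primitive (a : ℕ) : Primitive (yw a) := by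
  constructor
  · simp [yw]
  · intro z k h
    have hc : (yw a).count true = k * z.count true := by rw [h, listPow_count]
    rw [yw_count] at hc
    exact Nat.dvd_one.mp ⟨z.count true, hc⟩

theorem yw_injective : Function.Injective yw := by
  intro a b h
  have := congrArg List.length h
  simpa [yw_length] using this

/-! ### infix helpers -/

theorem take_stable {p x : List α} (h : p <+: x) {ℓ : ℕ} (hl : ℓ ≤ p.length) :
    x.take ℓ = p.take ℓ := by
  obtain ⟨r, rfl⟩ := h
  rw [take_append, Nat.sub_eq_zero_of_le hl, take_zero, append_nil]

theorem drop_stable {s x : List α} (h : s <:+ x) {t : ℕ} (ht : t ≤ s.length) :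
    x.drop (x.length - t) = s.drop (s.length - t) := by
  obtain ⟨r, rfl⟩ := h
  rw [drop_append]
  have h1 : (r ++ s).length - t - r.length = s.length - t := by simp; omega
  have h2 : r.length ≤ (r ++ s).length - t := by simp; omega
  rw [h1, drop_eq_nil_of_le h2, nil_append]

theorem infix_iff_offset {u x : List α} {n : ℕ} (hn : u.length = n) :
    u <:+: x ↔ ∃ o, o + n ≤ x.length ∧ u = (x.drop o).take n := by
  constructor
  · rintro ⟨s, t, rfl⟩
    subst hn
    refine ⟨s.length, by simp only [length_append]; omega, ?_⟩
    rw [append_assoc, drop_left, take_append, take_of_length_le le_rfl,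
      Nat.sub_self, take_zero, append_nil]
  · rintro ⟨o, ho, hu⟩
    rw [hu]
    exact ((take_prefix _ _).isInfix).trans ((drop_suffix _ _).isInfix)

theorem infix_append_cases {u x z : List α} {n : ℕ} (hn : u.length = n) (h : u <:+: x ++ z) :
    u <:+: x ∨ u <:+: z ∨
      ∃ t, 1 ≤ t ∧ t ≤ x.length ∧ t < n ∧ n - t ≤ z.length ∧
        u = x.drop (x.length - t) ++ z.take (n - t) := by
  obtain ⟨o, ho, hu⟩ := (infix_iff_offset hn).mp h
  rw [length_append] at ho
  rcases le_or_gt (o + n) x.length with h1 | h1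
  · left
    rw [infix_iff_offset hn]
    refine ⟨o, h1, ?_⟩
    rw [hu, drop_append, take_append]
    have : n - (x.drop o).length = 0 := by simp; omega
    rw [this, take_zero, append_nil]
  rcases le_or_gt x.length o with h2 | h2
  · right; left
    rw [infix_iff_offset hn]
    refine ⟨o - x.length, by omega, ?_⟩
    rw [hu, drop_append, drop_eq_nil_of_le h2, nil_append]
  · right; right
    refine ⟨x.length - o, by omega, by omega, by omega, by omega, ?_⟩
    rw [hu, drop_append, Nat.sub_eq_zero_of_le h2.le, drop_zero,
      take_append]
    have hxo : (x.drop o).length = x.length - o := by simp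
    rw [take_of_length_le (by omega), hxo]
    congr 2
    · omega

/-! ### the infinite word -/

def UU (g : ℕ → ℕ) : ℕ → List Bool
  | 0 => [true]
  | k+1 => UU g k ++ (listPow (yw (g k)) (UU g k).length ++ UU g k)

theorem UU_succ (g : ℕ → ℕ) (k : ℕ) :
    UU g (k+1) = UU g k ++ (listPow (yw (g k)) (UU g k).length ++ UU g k) := rfl

theorem UU_length_lt (g : ℕ → ℕ) : ∀ k, k < (UU g k).length
  | 0 => by simp [UU]
  | k+1 => by
    have := UU_length_lt g k
    simp only [UU_succ, length_append]
    omega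

theorem UU_prefix_succ (g : ℕ → ℕ) (k : ℕ) : UU g k <+: UU g (k+1) := ⟨_, rfl⟩

theorem UU_suffix_succ (g : ℕ → ℕ) (k : ℕ) : UU g k <:+ UU g (k+1) :=
  ⟨UU g k ++ listPow (yw (g k)) (UU g k).length, by rw [UU_succ]; simp [append_assoc]⟩

theorem UU_prefix (g : ℕ → ℕ) {k m : ℕ} (h : k ≤ m) : UU g k <+: UU g m := by
  induction m with
  | zero => rw [Nat.le_zero.mp h]
  | succ m ih =>
    rcases Nat.lt_or_ge k (m+1) with h' | h'
    · exact (ih (by omega)).trans (UU_prefix_succ g m)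
    · rw [Nat.le_antisymm h h']

theorem UU_suffix (g : ℕ → ℕ) {k m : ℕ} (h : k ≤ m) : UU g k <:+ UU g m := by
  induction m with
  | zero => rw [Nat.le_zero.mp h]
  | succ m ih =>
    rcases Nat.lt_or_ge k (m+1) with h' | h'
    · exact (ih (by omega)).trans (UU_suffix_succ g m)
    · rw [Nat.le_antisymm h h']

theorem UU_length_mono (g : ℕ → ℕ) {k m : ℕ} (h : k ≤ m) :
    (UU g k).length ≤ (UU g m).length :=
  (UU_prefix g h).length_le

def WW (g : ℕ → ℕ) (i : ℕ) : Bool := (UU g (i+1)).getD i false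

theorem WW_eq (g : ℕ → ℕ) {k i : ℕ} (h : i < (UU g k).length) :
    WW g i = (UU g k)[i] := by
  unfold WW
  have hi : i < (UU g (i+1)).length := Nat.lt_of_lt_of_le (by omega) (UU_length_lt g (i+1)).le
  rw [List.getD_eq_getElem _ _ hi]
  rcases Nat.le_total k (i+1) with h' | h'
  · exact ((UU_prefix g h').getElem h).symm
  · exact (UU_prefix g h').getElem hi

theorem factorAt_iff {w : ℕ → α} {i : ℕ} {u : List α} :
    FactorAt w i u ↔ ∀ j (hj : j < u.length), u[j] = w (i + j) := by
  constructor
  · intro h j hj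
    rw [List.getElem_of_eq h hj]
    simp
  · intro h
    apply List.ext_getElem (by simp)
    intro j h1 h2
    simpa using h j h1

theorem factorAt_of_eq_append {g : ℕ → ℕ} {k : ℕ} {s u t : List Bool}
    (h : UU g k = s ++ u ++ t) : FactorAt (WW g) s.length u := by
  rw [factorAt_iff]
  intro j hj
  have hlen : s.length + j < (UU g k).length := by
    rw [h]; simp only [length_append]; omega
  rw [WW_eq g hlen]
  rw [append_assoc] at h
  have h1 : s.length ≤ s.length + j := by omega
  rw [List.getElem_of_eq h hlen, List.getElem_append_right h1]
  have h2 : s.length + j - s.length < u.length := by omega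
  rw [List.getElem_append_left h2]
  congr 1
  omega

theorem fac_iff {g : ℕ → ℕ} {u : List Bool} :
    u ∈ Fac (WW g) ↔ ∃ k, u <:+: UU g k := by
  constructor
  · rintro ⟨i, hi⟩
    refine ⟨i + u.length, (infix_iff_offset rfl).mpr ⟨i, ?_, ?_⟩⟩
    · exact (UU_length_lt g (i + u.length)).le
    · apply List.ext_getElem
      · simp only [length_take, length_drop]
        have := UU_length_lt g (i + u.length)
        omega
      · intro j h1 h2
        rw [List.getElem_take, List.getElem_drop]
        rw [factorAt_iff] at hi
        rw [hi j h1]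
        exact WW_eq g (by have := UU_length_lt g (i + u.length); omega)
  · rintro ⟨k, s, t, hst⟩
    exact ⟨s.length, factorAt_of_eq_append hst.symm⟩

theorem recurrence {g : ℕ → ℕ} (u : List Bool) (hu : u ∈ Fac (WW g)) (N : ℕ) :
    ∃ i, N ≤ i ∧ FactorAt (WW g) i u := by
  obtain ⟨k, hk⟩ := fac_iff.mp hu
  set m := max k N with hm
  have h1 : u <:+: UU g m := hk.trans (UU_prefix g (le_max_left k N)).isInfix
  obtain ⟨s, t, hst⟩ := h1
  set s' := (UU g m ++ listPow (yw (g m)) (UU g m).length) ++ s with hs'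
  have heq : UU g (m+1) = s' ++ u ++ t := by
    rw [UU_succ, hs', ← hst]
    simp [append_assoc]
  refine ⟨s'.length, ?_, factorAt_of_eq_append heq⟩
  have : m < (UU g m).length := UU_length_lt g m
  simp only [hs', length_append]
  have : N ≤ m := le_max_right k N
  omega

theorem pow_mem_fac {g : ℕ → ℕ} {k m : ℕ} (h : m ≤ (UU g k).length) :
    listPow (yw (g k)) m ∈ Fac (WW g) := by
  rw [fac_iff]
  refine ⟨k+1, ?_⟩
  obtain ⟨r, hr⟩ := listPow_prefix (yw (g k)) h
  exact ⟨UU g k, r ++ UU g k, by rw [UU_succ, ← hr]; simp [append_assoc]⟩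

/-! ### canonical forms for factors of powers of `yw a` -/

theorem lp_take_repl {a b ℓ : ℕ} (hl : ℓ ≤ a) (hb : ℓ ≤ b * (a+1)) :
    (listPow (yw a) b).take ℓ = replicate ℓ false := by
  cases b with
  | zero => simp at hb; simp [hb, listPow]
  | succ b =>
    show ((replicate a false ++ [true]) ++ listPow (yw a) b).take ℓ = _
    rw [take_append, take_append]
    have h1 : ℓ - (replicate a false).length = 0 := by simp; omega
    have h2 : ℓ - (replicate a false ++ [true]).length = 0 := by simp; omega
    rw [h1, h2, take_zero, take_zero, append_nil, append_nil, take_replicate,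
      Nat.min_eq_left hl]

theorem lp_drop {a d r : ℕ} (hr : r ≤ a) (hd : 1 ≤ d) :
    (listPow (yw a) d).drop r
      = replicate (a - r) false ++ ([true] ++ listPow (yw a) (d-1)) := by
  obtain ⟨e, rfl⟩ : ∃ e, d = e + 1 := ⟨d - 1, by omega⟩
  show ((replicate a false ++ [true]) ++ listPow (yw a) e).drop r = _
  rw [drop_append, drop_append, drop_replicate]
  have h1 : r - (replicate a false).length = 0 := by simp; omega
  have h2 : r - (replicate a false ++ [true]).length = 0 := by simp; omega
  rw [h1, h2, drop_zero, drop_zero]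
  simp

theorem lp_take_drop_eq_of_le {a b c r nn : ℕ} (hbc : b ≤ c) (hb : r + nn ≤ b * (a+1)) :
    ((listPow (yw a) b).drop r).take nn = ((listPow (yw a) c).drop r).take nn := by
  have hsplit : listPow (yw a) c = listPow (yw a) b ++ listPow (yw a) (c - b) := by
    rw [← listPow_add, Nat.add_sub_cancel' hbc]
  rw [hsplit, drop_append]
  have hlen : (listPow (yw a) b).length = b * (a+1) := by
    rw [listPow_length, yw_length]
  have h1 : r - (listPow (yw a) b).length = 0 := by rw [hlen]; omega
  rw [h1, drop_zero, take_append]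
  have h2 : nn - ((listPow (yw a) b).drop r).length = 0 := by
    simp only [length_drop, hlen]; omega
  rw [h2, take_zero, append_nil]

theorem lp_take_drop_eq {a b c r nn : ℕ} (hb : r + nn ≤ b * (a+1))
    (hc : r + nn ≤ c * (a+1)) :
    ((listPow (yw a) b).drop r).take nn = ((listPow (yw a) c).drop r).take nn := by
  rcases le_total b c with h | h
  · exact lp_take_drop_eq_of_le h hb
  · exact (lp_take_drop_eq_of_le h hc).symm

theorem lp_suffix_eq_of_le {a b c t : ℕ} (hbc : b ≤ c) (hb : t ≤ b * (a+1)) :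
    (listPow (yw a) c).drop ((listPow (yw a) c).length - t)
      = (listPow (yw a) b).drop ((listPow (yw a) b).length - t) :=
  drop_stable (listPow_suffix (yw a) hbc) (by rw [listPow_length, yw_length]; omega)

theorem lp_suffix_repl {a b t : ℕ} (ht : 1 ≤ t) (hta : t ≤ a + 1) (hb : 1 ≤ b) :
    (listPow (yw a) b).drop ((listPow (yw a) b).length - t)
      = replicate (t-1) false ++ [true] := by
  have h1 : (listPow (yw a) b).drop ((listPow (yw a) b).length - t)
      = (listPow (yw a) 1).drop ((listPow (yw a) 1).length - t) :=
    lp_suffix_eq_of_le hb (by omega)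
  rw [h1, listPow_one]
  simp only [yw, yw_length]
  have hlen : (replicate a false ++ [true]).length = a + 1 := by simp
  rw [hlen, drop_append, drop_replicate]
  have h2 : a + 1 - t - (replicate a false).length = 0 := by simp; omega
  rw [h2, drop_zero]
  have h3 : a - (a + 1 - t) = t - 1 := by omega
  rw [h3]

/-- canonical form of suffixes of powers of `yw a`, at scale `nn` -/
theorem lp_suffix_canon {a b t nn : ℕ} (htn : t ≤ nn) (htb : t ≤ b * (a+1)) :
    (listPow (yw a) b).drop ((listPow (yw a) b).length - t)
      = (listPow (yw (min a nn)) (nn+2)).drop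
          ((listPow (yw (min a nn)) (nn+2)).length - t) := by
  rcases Nat.eq_zero_or_pos t with rfl | ht
  · simp
  rcases le_or_gt a nn with han | han
  · rw [Nat.min_eq_left han]
    have hb1 : 1 ≤ b := by
      rcases Nat.eq_zero_or_pos b with rfl | h; · simp at htb; omega
      · exact h
    rcases le_total b (nn+2) with h | h
    · exact (lp_suffix_eq_of_le h htb).symm
    · exact lp_suffix_eq_of_le h (by nlinarith)
  · rw [Nat.min_eq_right han.le]
    have hb1 : 1 ≤ b := by
      rcases Nat.eq_zero_or_pos b with rfl | h; · simp at htb; omega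
      · exact h
    rw [lp_suffix_repl ht (by omega) hb1, lp_suffix_repl ht (by omega) (by omega)]

/-- canonical form of prefixes of powers of `yw a`, at scale `nn` -/
theorem lp_take_canon {a b ℓ nn : ℕ} (hln : ℓ ≤ nn) (hlb : ℓ ≤ b * (a+1)) :
    (listPow (yw a) b).take ℓ = (listPow (yw (min a nn)) (nn+2)).take ℓ := by
  rcases le_or_gt a nn with han | han
  · rw [Nat.min_eq_left han]
    have h1 : ((listPow (yw a) b).drop 0).take ℓ = ((listPow (yw a) (nn+2)).drop 0).take ℓ :=
      lp_take_drop_eq (by omega) (by nlinarith)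
    simpa using h1
  · rw [Nat.min_eq_right han.le, lp_take_repl (by omega) hlb,
      lp_take_repl (by omega) (by nlinarith)]

theorem lp_window_one (a d r nn : ℕ) (hra : r ≤ a) (h1 : a < r + nn)
    (h2 : r + nn ≤ d * (a+1)) (han : nn ≤ a + 1) :
    ((listPow (yw a) d).drop r).take nn
      = replicate (a - r) false ++ [true] ++ replicate (nn - (a - r) - 1) false := by
  have hd : 1 ≤ d := by
    rcases Nat.eq_zero_or_pos d with rfl | h; · simp at h2; omega
    · exact h
  rw [lp_drop hra hd, take_append, take_append]
  have e1 : (replicate (a-r) false).length = a - r := by simp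
  rw [take_replicate, e1]
  have e2 : min nn (a - r) = a - r := by omega
  have e3 : nn - (a - r) = (nn - (a - r) - 1) + 1 := by omega
  rw [e2]
  have e4 : ([true] : List Bool).take (nn - (a-r)) = [true] := by
    apply take_of_length_le; simp; omega
  rw [e4]
  have e5 : ([true] : List Bool).length = 1 := rfl
  rw [e5]
  have e6 : nn - (a - r) - 1 ≤ a := by omega
  obtain ⟨e, rfl⟩ : ∃ e, d = e + 1 := ⟨d - 1, by omega⟩
  have e7 : nn - (a - r) - 1 ≤ e * (a + 1) := by
    have : (e+1) * (a+1) = e * (a+1) + (a+1) := by ring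
    omega
  have e8 : (e + 1) - 1 = e := by omega
  rw [e8, lp_take_repl e6 e7, append_assoc]

/-- canonical form of interior factors of powers of `yw a` at scale `nn` -/
theorem lp_interior_canon {u : List Bool} {a b nn : ℕ} (hn : u.length = nn)
    (h : u <:+: listPow (yw a) b) :
    ∃ r ≤ nn, u = ((listPow (yw (min a nn)) (nn+2)).drop r).take nn := by
  rcases Nat.eq_zero_or_pos nn with rfl | hnpos
  · exact ⟨0, le_rfl, by rw [eq_nil_of_length_eq_zero hn]; simp⟩
  obtain ⟨o, ho, hu⟩ := (infix_iff_offset hn).mp h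
  rw [listPow_length, yw_length] at ho
  set c := o / (a+1) with hc
  set r := o % (a+1) with hr
  have hra : r ≤ a := by
    have := Nat.mod_lt o (show 0 < a + 1 by omega); omega
  have hdm : c * (a+1) + r = o := by
    rw [Nat.mul_comm c (a+1)]; exact Nat.div_add_mod o (a+1)
  have hcb : c ≤ b := by
    by_contra hcb
    push_neg at hcb
    have h1 : (a+1) * (b+1) ≤ (a+1) * c := Nat.mul_le_mul_left _ (by omega)
    nlinarith
  obtain ⟨d, hbd⟩ : ∃ d, b = c + d := ⟨b - c, (Nat.add_sub_cancel' hcb).symm⟩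
  have hsplit : listPow (yw a) b = listPow (yw a) c ++ listPow (yw a) d := by
    rw [hbd, listPow_add]
  have hlenc : (listPow (yw a) c).length = c * (a+1) := by rw [listPow_length, yw_length]
  have hprod : b * (a+1) = c * (a+1) + d * (a+1) := by rw [hbd]; ring
  rw [hprod] at ho
  have hdrop : (listPow (yw a) b).drop o = (listPow (yw a) d).drop r := by
    rw [hsplit, drop_append, hlenc]
    have h1 : o - c * (a+1) = r := by omega
    have h2 : (listPow (yw a) c).drop o = [] :=
      drop_eq_nil_of_le (by rw [hlenc]; omega)
    rw [h1, h2, nil_append]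
  have hrd : r + nn ≤ d * (a+1) := by omega
  rw [hdrop] at hu
  rcases le_or_gt a nn with han | han
  · -- small period: keep `a`, change exponent
    refine ⟨r, by omega, ?_⟩
    rw [Nat.min_eq_left han, hu]
    exact lp_take_drop_eq hrd (by nlinarith)
  · -- large period: at most one `true` visible
    rcases le_or_gt (r + nn) a with hcase | hcase
    · -- all-false window
      refine ⟨0, by omega, ?_⟩
      have hd1 : 1 ≤ d := by
        rcases Nat.eq_zero_or_pos d with rfl | hp
        · simp at hrd; omega
        · exact hp
      have hL : ((listPow (yw a) d).drop r).take nn = replicate nn false := by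
        rw [lp_drop hra hd1, take_append, take_replicate]
        have e2 : nn - (replicate (a-r) false).length = 0 := by simp; omega
        rw [e2, take_zero, append_nil]
        congr 1
        simp; omega
      have hR : ((listPow (yw nn) (nn+2)).drop 0).take nn = replicate nn false := by
        rw [drop_zero, lp_take_repl le_rfl (by nlinarith)]
      rw [Nat.min_eq_right han.le, hR, hu, hL]
    · -- window sees exactly one `true`
      set x := a - r with hx
      refine ⟨nn - x, by omega, ?_⟩
      rw [Nat.min_eq_right han.le, hu]
      rw [lp_window_one a d r nn hra (by omega) hrd (by omega)]
      have harith : (nn - x) + nn ≤ (nn+2) * (nn+1) := by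
        have h2n : (nn - x) + nn ≤ 2 * nn := by omega
        nlinarith
      rw [lp_window_one nn (nn+2) (nn - x) nn (by omega) (by omega) harith (by omega)]
      have e1 : nn - (nn - x) = x := by omega
      rw [e1]

/-! ### the covering family -/

def WinF (a nn : ℕ) : Finset (List Bool) :=
  (Finset.range (nn+1)).image fun r => ((listPow (yw a) (nn+2)).drop r).take nn

def Cr1F (g : ℕ → ℕ) (q a nn : ℕ) : Finset (List Bool) :=
  (Finset.range (nn+1)).image fun t =>
    (UU g (q+1)).drop ((UU g (q+1)).length - t) ++ (listPow (yw a) (nn+2)).take (nn - t)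

def Cr2F (g : ℕ → ℕ) (q a nn : ℕ) : Finset (List Bool) :=
  (Finset.range (nn+1)).image fun t =>
    (listPow (yw a) (nn+2)).drop ((listPow (yw a) (nn+2)).length - t) ++
      (UU g (q+1)).take (nn - t)

def CrQF (g : ℕ → ℕ) (q nn : ℕ) : Finset (List Bool) :=
  (Finset.range (nn+1)).image fun t =>
    (UU g (q+1)).drop ((UU g (q+1)).length - t) ++
      (listPow (yw (g q)) (UU g q).length ++ UU g q).take (nn - t)

def GamF (jseq : ℕ → ℕ) (nn : ℕ) : Finset ℕ :=
  insert nn ((Finset.range nn).image fun i => min (jseq i) nn)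

def GF (g jseq : ℕ → ℕ) (q nn : ℕ) : Finset (List Bool) :=
  CrQF g q nn ∪ (GamF jseq nn).biUnion fun a => WinF a nn ∪ Cr1F g q a nn ∪ Cr2F g q a nn

theorem min_mem_GamF {g jseq : ℕ → ℕ} (hj : ∀ i, i ≤ jseq i)
    (hg : ∀ k, ∃ i, g k = jseq i) (nn k : ℕ) : min (g k) nn ∈ GamF jseq nn := by
  rcases le_or_gt nn (g k) with h | h
  · rw [Nat.min_eq_right h]
    exact Finset.mem_insert_self _ _
  · obtain ⟨i, hi⟩ := hg k
    apply Finset.mem_insert_of_mem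
    apply Finset.mem_image.mpr
    refine ⟨i, Finset.mem_range.mpr ?_, ?_⟩
    · have := hj i; omega
    · rw [← hi, Nat.min_eq_left h.le]

theorem UU_take_eq (g : ℕ → ℕ) {k m ℓ : ℕ} (h1 : ℓ ≤ (UU g k).length)
    (h2 : ℓ ≤ (UU g m).length) : (UU g k).take ℓ = (UU g m).take ℓ := by
  rcases le_total k m with h | h
  · exact (take_stable (UU_prefix g h) h1).symm
  · exact take_stable (UU_prefix g h) h2

theorem VK_length (g : ℕ → ℕ) (K : ℕ) :
    (listPow (yw (g K)) (UU g K).length).length = (UU g K).length * (g K + 1) := by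
  rw [listPow_length, yw_length]

/-- analysis of a factor of `V K ++ U K`. -/
theorem vu_cases {g jseq : ℕ → ℕ} (hj : ∀ i, i ≤ jseq i) (hg : ∀ k, ∃ i, g k = jseq i)
    {nn q K : ℕ} (hq2 : nn ≤ (UU g (q+1)).length) (hK : q ≤ K)
    {u : List Bool} (hlen : u.length = nn)
    (h : u <:+: (listPow (yw (g K)) (UU g K).length ++ UU g K)) :
    u <:+: UU g K ∨ u ∈ GF g jseq q nn := by
  rcases infix_append_cases hlen h with hx | hz | ⟨t, ht1, ht2, ht3, ht4, hu⟩
  · -- interior of V K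
    right
    obtain ⟨r, hr, hru⟩ := lp_interior_canon hlen hx
    apply Finset.mem_union_right
    apply Finset.mem_biUnion.mpr
    refine ⟨min (g K) nn, min_mem_GamF hj hg nn K, ?_⟩
    apply Finset.mem_union_left
    apply Finset.mem_union_left
    exact Finset.mem_image.mpr ⟨r, Finset.mem_range.mpr (by omega), hru.symm⟩
  · exact Or.inl hz
  · -- crossing V K | U K
    right
    rw [VK_length] at ht2
    have hsuf : (listPow (yw (g K)) (UU g K).length).drop
          ((listPow (yw (g K)) (UU g K).length).length - t)
        = (listPow (yw (min (g K) nn)) (nn+2)).drop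
          ((listPow (yw (min (g K) nn)) (nn+2)).length - t) :=
      lp_suffix_canon (by omega) (by omega)
    have htake : (UU g K).take (nn - t) = (UU g (q+1)).take (nn - t) :=
      UU_take_eq g ht4 (le_trans (Nat.sub_le nn t) hq2)
    apply Finset.mem_union_right
    apply Finset.mem_biUnion.mpr
    refine ⟨min (g K) nn, min_mem_GamF hj hg nn K, ?_⟩
    apply Finset.mem_union_right
    apply Finset.mem_image.mpr
    refine ⟨t, Finset.mem_range.mpr (by omega), ?_⟩
    rw [← hsuf, ← htake, ← hu]

/-- analysis of a factor at level `K + 1` for `K ≥ q + 1`. -/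
theorem level_step {g jseq : ℕ → ℕ} (hj : ∀ i, i ≤ jseq i) (hg : ∀ k, ∃ i, g k = jseq i)
    {nn q K : ℕ} (hq2 : nn ≤ (UU g (q+1)).length) (hK : q + 1 ≤ K)
    {u : List Bool} (hlen : u.length = nn) (h : u <:+: UU g (K+1)) :
    u <:+: UU g K ∨ u ∈ GF g jseq q nn := by
  rw [UU_succ] at h
  rcases infix_append_cases hlen h with hx | hz | ⟨t, ht1, ht2, ht3, ht4, hu⟩
  · exact Or.inl hx
  · exact vu_cases hj hg hq2 (by omega) hlen hz
  · -- crossing U K | (V K ++ U K)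
    right
    have hUq1 : (UU g (q+1)).length ≤ (UU g K).length := UU_length_mono g hK
    have hdrop : (UU g K).drop ((UU g K).length - t)
        = (UU g (q+1)).drop ((UU g (q+1)).length - t) :=
      drop_stable (UU_suffix g hK) (by omega)
    have hVlen : nn ≤ (listPow (yw (g K)) (UU g K).length).length := by
      rw [VK_length]
      have : (UU g K).length * 1 ≤ (UU g K).length * (g K + 1) :=
        Nat.mul_le_mul_left _ (by omega)
      omega
    have htake1 : (listPow (yw (g K)) (UU g K).length ++ UU g K).take (nn - t)
        = (listPow (yw (g K)) (UU g K).length).take (nn - t) :=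
      take_stable (prefix_append _ _) (by omega)
    have htake2 : (listPow (yw (g K)) (UU g K).length).take (nn - t)
        = (listPow (yw (min (g K) nn)) (nn+2)).take (nn - t) :=
      lp_take_canon (by omega) (by rw [VK_length] at hVlen; omega)
    apply Finset.mem_union_right
    apply Finset.mem_biUnion.mpr
    refine ⟨min (g K) nn, min_mem_GamF hj hg nn K, ?_⟩
    apply Finset.mem_union_left
    apply Finset.mem_union_right
    apply Finset.mem_image.mpr
    refine ⟨t, Finset.mem_range.mpr (by omega), ?_⟩
    rw [← htake2, ← htake1, ← hdrop, ← hu]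

/-- analysis of a factor at level `q + 1` (the base level). -/
theorem level_base {g jseq : ℕ → ℕ} (hj : ∀ i, i ≤ jseq i) (hg : ∀ k, ∃ i, g k = jseq i)
    {nn q : ℕ} (hq1 : (UU g q).length < nn) (hq2 : nn ≤ (UU g (q+1)).length)
    {u : List Bool} (hlen : u.length = nn) (h : u <:+: UU g (q+1)) :
    u ∈ GF g jseq q nn := by
  rw [UU_succ] at h
  have hsmall : ∀ v : List Bool, v <:+: UU g q → v.length = nn → False := by
    intro v hv hvl
    have := hv.length_le
    omega
  rcases infix_append_cases hlen h with hx | hz | ⟨t, ht1, ht2, ht3, ht4, hu⟩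
  · exact (hsmall u hx hlen).elim
  · rcases vu_cases hj hg hq2 (le_refl q) hlen hz with h' | h'
    · exact (hsmall u h' hlen).elim
    · exact h'
  · -- crossing U q | (V q ++ U q)
    have hdrop : (UU g q).drop ((UU g q).length - t)
        = (UU g (q+1)).drop ((UU g (q+1)).length - t) :=
      (drop_stable (UU_suffix_succ g q) (by omega)).symm
    apply Finset.mem_union_left
    apply Finset.mem_image.mpr
    refine ⟨t, Finset.mem_range.mpr (by omega), ?_⟩
    rw [← hdrop, ← hu]

/-- every length-`nn` factor of the word lies in `GF`. -/
theorem mem_GF {g jseq : ℕ → ℕ} (hj : ∀ i, i ≤ jseq i) (hg : ∀ k, ∃ i, g k = jseq i)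
    {nn q : ℕ} (hq1 : (UU g q).length < nn) (hq2 : nn ≤ (UU g (q+1)).length)
    (m : ℕ) : ∀ {u : List Bool}, u.length = nn → u <:+: UU g (q+1+m) →
      u ∈ GF g jseq q nn := by
  induction m with
  | zero => exact fun hlen h => level_base hj hg hq1 hq2 hlen h
  | succ m ih =>
    intro u hlen h
    have : q + 1 + (m + 1) = (q + 1 + m) + 1 := by omega
    rw [this] at h
    rcases level_step hj hg hq2 (by omega) hlen h with h' | h'
    · exact ih hlen h'
    · exact h'

/-! ### cardinality bounds -/

theorem GamF_card_le (jseq : ℕ → ℕ) (nn : ℕ) :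
    (GamF jseq nn).card ≤ ((Finset.range nn).filter fun i => jseq i < nn).card + 2 := by
  classical
  set dd := ((Finset.range nn).filter fun i => jseq i < nn).card with hdd
  have hsub : ((Finset.range nn).image fun i => min (jseq i) nn) ⊆
      insert nn (((Finset.range nn).filter fun i => jseq i < nn).image
        fun i => min (jseq i) nn) := by
    intro a ha
    obtain ⟨i, hi, rfl⟩ := Finset.mem_image.mp ha
    rcases lt_or_ge (jseq i) nn with h | h
    · exact Finset.mem_insert_of_mem
        (Finset.mem_image.mpr ⟨i, Finset.mem_filter.mpr ⟨hi, h⟩, rfl⟩)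
    · rw [Nat.min_eq_right h]
      exact Finset.mem_insert_self _ _
  calc (GamF jseq nn).card
      ≤ ((Finset.range nn).image fun i => min (jseq i) nn).card + 1 :=
        Finset.card_insert_le _ _
    _ ≤ (insert nn (((Finset.range nn).filter fun i => jseq i < nn).image
          fun i => min (jseq i) nn)).card + 1 := by
        exact Nat.add_le_add_right (Finset.card_le_card hsub) 1
    _ ≤ (dd + 1) + 1 := by
        apply Nat.add_le_add_right
        calc _ ≤ _ + 1 := Finset.card_insert_le _ _
          _ ≤ dd + 1 := Nat.add_le_add_right Finset.card_image_le 1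
    _ = dd + 2 := by omega

theorem GF_card_le (g jseq : ℕ → ℕ) (q nn : ℕ) :
    (GF g jseq q nn).card ≤
      (nn+1) + (((Finset.range nn).filter fun i => jseq i < nn).card + 2) * (3*(nn+1)) := by
  classical
  have h1 : (CrQF g q nn).card ≤ nn + 1 :=
    le_trans Finset.card_image_le (by simp)
  have h2 : ∀ a ∈ GamF jseq nn,
      (WinF a nn ∪ Cr1F g q a nn ∪ Cr2F g q a nn).card ≤ 3*(nn+1) := by
    intro a _
    have w1 : (WinF a nn).card ≤ nn + 1 := le_trans Finset.card_image_le (by simp)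
    have w2 : (Cr1F g q a nn).card ≤ nn + 1 := le_trans Finset.card_image_le (by simp)
    have w3 : (Cr2F g q a nn).card ≤ nn + 1 := le_trans Finset.card_image_le (by simp)
    calc (WinF a nn ∪ Cr1F g q a nn ∪ Cr2F g q a nn).card
        ≤ (WinF a nn ∪ Cr1F g q a nn).card + (Cr2F g q a nn).card :=
          Finset.card_union_le _ _
      _ ≤ ((WinF a nn).card + (Cr1F g q a nn).card) + (Cr2F g q a nn).card :=
          Nat.add_le_add_right (Finset.card_union_le _ _) _
      _ ≤ 3*(nn+1) := by omega
  calc (GF g jseq q nn).card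
      ≤ (CrQF g q nn).card +
        ((GamF jseq nn).biUnion fun a => WinF a nn ∪ Cr1F g q a nn ∪ Cr2F g q a nn).card :=
        Finset.card_union_le _ _
    _ ≤ (nn+1) + (GamF jseq nn).card * (3*(nn+1)) := by
        apply Nat.add_le_add h1
        calc ((GamF jseq nn).biUnion fun a => WinF a nn ∪ Cr1F g q a nn ∪ Cr2F g q a nn).card
            ≤ ∑ a ∈ GamF jseq nn, (WinF a nn ∪ Cr1F g q a nn ∪ Cr2F g q a nn).card :=
              Finset.card_biUnion_le
          _ ≤ (GamF jseq nn).card * (3*(nn+1)) := by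
              have := Finset.sum_le_card_nsmul (GamF jseq nn)
                (fun a => (WinF a nn ∪ Cr1F g q a nn ∪ Cr2F g q a nn).card) (3*(nn+1)) h2
              simpa [smul_eq_mul] using this
    _ ≤ _ := by
        apply Nat.add_le_add_left
        exact Nat.mul_le_mul_right _ (GamF_card_le jseq nn)

/-! ### the complexity bound -/

theorem facComplexity_le {g jseq : ℕ → ℕ} (hj : ∀ i, i ≤ jseq i)
    (hg : ∀ k, ∃ i, g k = jseq i) {nn : ℕ} (h2 : 2 ≤ nn) :
    FacComplexity (WW g) nn ≤
      (nn+1) + (((Finset.range nn).filter fun i => jseq i < nn).card + 2) * (3*(nn+1)) := by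
  classical
  have hex : ∃ k, nn ≤ (UU g k).length := ⟨nn, (UU_length_lt g nn).le⟩
  set k0 := Nat.find hex with hk0
  have hk0p : 0 < k0 := by
    rcases Nat.eq_zero_or_pos k0 with h | h
    · exfalso
      have := Nat.find_spec hex
      rw [← hk0, h] at this
      have : nn ≤ (UU g 0).length := this
      simp [UU] at this
      omega
    · exact h
  obtain ⟨q, hq⟩ : ∃ q, k0 = q + 1 := ⟨k0 - 1, by omega⟩
  have hq2 : nn ≤ (UU g (q+1)).length := by rw [← hq]; exact Nat.find_spec hex
  have hq1 : (UU g q).length < nn := by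
    by_contra hcon
    push_neg at hcon
    have := Nat.find_min hex (m := q) (by omega)
    exact this hcon
  have hsub : {u : List Bool | u.length = nn ∧ u ∈ Fac (WW g)} ⊆ ↑(GF g jseq q nn) := by
    rintro u ⟨hlen, hfac⟩
    obtain ⟨k, hk⟩ := fac_iff.mp hfac
    have hinf : u <:+: UU g (q+1+k) :=
      hk.trans (UU_prefix g (by omega)).isInfix
    exact mem_GF hj hg hq1 hq2 k hlen hinf
  calc FacComplexity (WW g) nn
      ≤ (↑(GF g jseq q nn) : Set (List Bool)).ncard :=
        Set.ncard_le_ncard hsub (GF g jseq q nn).finite_toSet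
    _ = (GF g jseq q nn).card := Set.ncard_coe_finset _
    _ ≤ _ := GF_card_le g jseq q nn

theorem construction_with_many_unbounded_exponents (f : ℕ → ℕ)
    (hf : Filter.Tendsto f Filter.atTop Filter.atTop) :
    ∃ w : ℕ → Bool,
      (∀ u ∈ Fac w, ∀ N : ℕ, ∃ i : ℕ, N ≤ i ∧ FactorAt w i u) ∧
      (∃ N : ℕ, ∀ n : ℕ, N ≤ n → FacComplexity w n ≤ n * f n) ∧
      {y : List Bool | Primitive y ∧ ∀ n : ℕ, 1 ≤ n → listPow y n ∈ Fac w}.Infinite := by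
  classical
  -- thresholds for f
  have hψ' : ∀ c : ℕ, ∃ N : ℕ, ∀ n ≥ N, c ≤ f n := fun c =>
    Filter.eventually_atTop.mp (hf.eventually_ge_atTop c)
  choose ψ hψ using hψ'
  -- the sparse sequence of periods
  obtain ⟨jseq, hjs, hjf⟩ : ∃ js : ℕ → ℕ, (∀ i, js i < js (i+1)) ∧
      (∀ i n, js i ≤ n → 8*(i+4) ≤ f n) := by
    refine ⟨fun i => Nat.rec (ψ 32) (fun i p => max (p+1) (ψ (8*(i+5)))) i, ?_, ?_⟩
    · intro i
      exact lt_of_lt_of_le (Nat.lt_succ_self _) (le_max_left _ _)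
    · intro i n hn
      cases i with
      | zero =>
        have := hψ 32 n hn
        omega
      | succ i =>
        have h1 : ψ (8*(i+5)) ≤ n := le_trans (le_max_right _ _) hn
        have := hψ (8*(i+5)) n h1
        omega
  have hstrict : StrictMono jseq := strictMono_nat_of_lt_succ hjs
  have hj : ∀ i, i ≤ jseq i := fun i => hstrict.le_apply
  set g : ℕ → ℕ := fun k => jseq (Nat.unpair k).1 with hgdef
  have hg : ∀ k, ∃ i, g k = jseq i := fun k => ⟨(Nat.unpair k).1, rfl⟩
  refine ⟨WW g, ?_, ?_, ?_⟩
  · -- recurrence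
    exact fun u hu N => recurrence u hu N
  · -- complexity
    refine ⟨max (jseq 0) 2, fun n hn => ?_⟩
    have h2 : 2 ≤ n := le_trans (le_max_right _ _) hn
    set dd := ((Finset.range n).filter fun i => jseq i < n).card with hdd
    have key : 8*(dd+3) ≤ f n := by
      rcases Nat.eq_zero_or_pos dd with h0 | hpos
      · have : jseq 0 ≤ n := le_trans (le_max_left _ _) hn
        have := hjf 0 n this
        omega
      · have hne : (((Finset.range n).filter fun i => jseq i < n)).Nonempty :=
          Finset.card_pos.mp hpos
        set M := (((Finset.range n).filter fun i => jseq i < n)).max' hne with hM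
        have hMmem := Finset.max'_mem _ hne
        have hMlt : jseq M < n := (Finset.mem_filter.mp hMmem).2
        have hsub : (((Finset.range n).filter fun i => jseq i < n)) ⊆
            Finset.range (M+1) := by
          intro i hi
          exact Finset.mem_range.mpr (by have := Finset.le_max' _ i hi; omega)
        have hcard : dd ≤ M + 1 := by
          have := Finset.card_le_card hsub
          simpa using this
        have hjle : jseq (dd - 1) ≤ jseq M := hstrict.monotone (by omega)
        have := hjf (dd - 1) n (by omega)
        have he : dd - 1 + 4 = dd + 3 := by omega
        rw [he] at this
        exact this
    have hb := facComplexity_le hj hg h2 (nn := n)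
    rw [← hdd] at hb
    have harith : (n+1) + (dd+2)*(3*(n+1)) ≤ n * (8*(dd+3)) := by nlinarith
    have hfin : n * (8*(dd+3)) ≤ n * f n := Nat.mul_le_mul_left n key
    omega
  · -- infinitely many primitive unbounded-exponent factors
    apply Set.infinite_of_injective_forall_mem (f := fun i => yw (jseq i))
    · exact fun a b hab => hstrict.injective (yw_injective hab)
    · intro i
      refine ⟨yw_primitive (jseq i), fun m hm => ?_⟩
      have hgk : g (Nat.pair i m) = jseq i := by
        rw [hgdef]; simp [Nat.unpair_pair]
      have hmem : listPow (yw (g (Nat.pair i m))) m ∈ Fac (WW g) := by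
        apply pow_mem_fac
        have h1 : m ≤ Nat.pair i m := Nat.right_le_pair i m
        have h2 := UU_length_lt g (Nat.pair i m)
        omega
      rwa [hgk] at hmem
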